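/- Let γ > 0 and let Q : H →L[ℝ] H be a positive operator. Assume (a) C ∘ Q ∘ C* ⪯ id_F, (b) A ∘ Q ∘ T* + T ∘ Q ∘ A* ⪯ 0, and (c) B ∘ B* ⪯ γ² • (T ∘ Q ∘ T*). Then for every v̄ ∈ F and every dual trajectory x̄ with initial data v̄, one has ‖B* (x̄ t)‖ ≤ γ · ‖v̄‖ for all t ≥ 0. (Theorem 2(ii), stated for the dual auxiliary PIE: the dual coercive Lyapunov certificate bounds the peak dual output.) -/

import Mathlib

open ContinuousLinearMap
open scoped RealInnerProductSpace

/-- Theorem 2(ii), stated for the dual auxiliary PIE: the dual coercive Lyapunov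
certificate bounds the peak dual output. -/
theorem stmt_1
    {H E F : Type*}
    [NormedAddCommGroup H] [InnerProductSpace ℝ H] [CompleteSpace H]
    [NormedAddCommGroup E] [InnerProductSpace ℝ E] [FiniteDimensional ℝ E]
    [NormedAddCommGroup F] [InnerProductSpace ℝ F] [FiniteDimensional ℝ F]
    (T A : H →L[ℝ] H) (B : E →L[ℝ] H) (C : H →L[ℝ] F)
    (γ : ℝ) (hγ : 0 < γ)
    (Q : H →L[ℝ] H) (hQpos : Q.IsPositive)
    (ha : (ContinuousLinearMap.id ℝ F - C ∘L Q ∘L adjoint C).IsPositive)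
    (hb : ((0 : H →L[ℝ] H) - (A ∘L Q ∘L adjoint T + T ∘L Q ∘L adjoint A)).IsPositive)
    (hc : ((γ ^ 2) • (T ∘L Q ∘L adjoint T) - B ∘L adjoint B).IsPositive)
    (vb : F) (xb xb' : ℝ → H)
    (hxbderiv : ∀ t : ℝ, HasDerivAt xb (xb' t) t)
    (hxbdyn : ∀ t ≥ (0 : ℝ), adjoint T (xb' t) = adjoint A (xb t))
    (hxb0 : adjoint T (xb 0) = adjoint C vb) :
    ∀ t ≥ (0 : ℝ), ‖adjoint B (xb t)‖ ≤ γ * ‖vb‖ := by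
  intro t ht
  set f : ℝ → ℝ := fun s => ⟪adjoint T (xb s), Q (adjoint T (xb s))⟫ with hfdef
  have hu : ∀ s : ℝ, HasDerivAt (fun r => adjoint T (xb r)) (adjoint T (xb' s)) s :=
    fun s => ((adjoint T).hasFDerivAt.comp_hasDerivAt s (hxbderiv s))
  have hQu : ∀ s : ℝ, HasDerivAt (fun r => Q (adjoint T (xb r))) (Q (adjoint T (xb' s))) s :=
    fun s => (Q.hasFDerivAt.comp_hasDerivAt s (hu s))
  have hf : ∀ s : ℝ, HasDerivAt f
      (⟪adjoint T (xb s), Q (adjoint T (xb' s))⟫ + ⟪adjoint T (xb' s), Q (adjoint T (xb s))⟫) s :=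
    fun s => (hu s).inner ℝ (hQu s)
  -- monotonicity of f on [0, ∞)
  have hfanti : AntitoneOn f (Set.Ici (0 : ℝ)) := by
    apply antitoneOn_of_deriv_nonpos (convex_Ici 0)
    · exact fun s _ => ((hf s).differentiableAt.continuousAt).continuousWithinAt
    · exact fun s _ => ((hf s).differentiableAt).differentiableWithinAt
    · intro s hs
      rw [interior_Ici] at hs
      rw [(hf s).deriv]
      have hdyn := hxbdyn s (le_of_lt hs)
      rw [hdyn]
      have key := hb.inner_nonneg_left (xb s)
      simp only [sub_apply, zero_apply, add_apply, comp_apply, RCLike.re_to_real,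
        inner_sub_left, inner_add_left, inner_zero_left] at key
      have e1 : ⟪A (Q (adjoint T (xb s))), xb s⟫ = ⟪adjoint T (xb s), Q (adjoint A (xb s))⟫ := by
        rw [← adjoint_inner_right A, ← adjoint_inner_left Q, hQpos.isSelfAdjoint.adjoint_eq,
          real_inner_comm]
      have e2 : ⟪T (Q (adjoint A (xb s))), xb s⟫ = ⟪adjoint A (xb s), Q (adjoint T (xb s))⟫ := by
        rw [← adjoint_inner_right T, ← adjoint_inner_left Q, hQpos.isSelfAdjoint.adjoint_eq,
          real_inner_comm]
      rw [e1, e2] at key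
      linarith
  have hft0 : f t ≤ f 0 := hfanti Set.self_mem_Ici ht ht
  -- f 0 ≤ ‖vb‖ ^ 2
  have hf0 : f 0 ≤ ‖vb‖ ^ 2 := by
    have key := ha.inner_nonneg_left vb
    simp only [sub_apply, ContinuousLinearMap.id_apply, comp_apply, RCLike.re_to_real,
      inner_sub_left] at key
    have e : ⟪C (Q (adjoint C vb)), vb⟫ = f 0 := by
      rw [← adjoint_inner_right C, real_inner_comm, hfdef]
      simp only [hxb0]
    rw [e] at key
    have : ⟪vb, vb⟫ = ‖vb‖ ^ 2 := real_inner_self_eq_norm_sq vb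
    linarith
  -- output bound squared
  have hsq : ‖adjoint B (xb t)‖ ^ 2 ≤ (γ * ‖vb‖) ^ 2 := by
    have key := hc.inner_nonneg_left (xb t)
    simp only [sub_apply, smul_apply, comp_apply, RCLike.re_to_real, inner_sub_left,
      inner_smul_left, RCLike.conj_to_real] at key
    have e1 : ⟪B (adjoint B (xb t)), xb t⟫ = ‖adjoint B (xb t)‖ ^ 2 := by
      rw [← adjoint_inner_right B]
      exact real_inner_self_eq_norm_sq _
    have e2 : ⟪T (Q (adjoint T (xb t))), xb t⟫ = f t := by
      rw [← adjoint_inner_right T, real_inner_comm]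
    rw [e1, e2] at key
    have hfn : f t ≤ ‖vb‖ ^ 2 := le_trans hft0 hf0
    have hγ2 : (0 : ℝ) ≤ γ ^ 2 := sq_nonneg γ
    calc ‖adjoint B (xb t)‖ ^ 2 ≤ γ ^ 2 * f t := by linarith
      _ ≤ γ ^ 2 * ‖vb‖ ^ 2 := by nlinarith
      _ = (γ * ‖vb‖) ^ 2 := by ring
  have hpos : (0 : ℝ) ≤ γ * ‖vb‖ := mul_nonneg hγ.le (norm_nonneg _)
  nlinarith [norm_nonneg (adjoint B (xb t)), hsq]
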